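/- The 5×5 circulant matrix L = M(cos²(4π/5), cos²(2π/5)) is completely positive semidefinite: the rank-one psd matrices x_i x_iᵀ with x_i = (cos(4iπ/5), sin(4iπ/5)) ∈ ℝ², i ∈ [5], form a Gram representation of L. -/

import Mathlib

open Matrix Real

def CompletelyPSD {n : ℕ} (A : Matrix (Fin n) (Fin n) ℝ) : Prop :=
  ∃ (d : ℕ) (X : Fin n → Matrix (Fin d) (Fin d) ℝ),
    1 ≤ d ∧ (∀ i, (X i).PosSemidef) ∧ ∀ i j, A i j = ((X i) * (X j)).trace

/-- The symmetric 5×5 circulant matrix `M(b,c)`: diagonal entries `1`,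
entries `b` at positions `(i, i ± 1 mod 5)`, entries `c` at positions `(i, i ± 2 mod 5)`. -/
def Mcirc (b c : ℝ) : Matrix (Fin 5) (Fin 5) ℝ :=
  Matrix.of fun i j =>
    if i = j then 1 else if i - j = (1 : Fin 5) ∨ i - j = (4 : Fin 5) then b else c

/-- The vectors `x_i = (cos(4iπ/5), sin(4iπ/5))` for `i ∈ [5]`. -/
noncomputable def cycVec (i : Fin 5) : Fin 2 → ℝ :=
  ![Real.cos (4 * (i.1 + 1) * π / 5), Real.sin (4 * (i.1 + 1) * π / 5)]

lemma vecMulVec_self_posSemidef (x : Fin 2 → ℝ) : (vecMulVec x x).PosSemidef := by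
  rw [vecMulVec_eq (Fin 1)]
  have h : replicateCol (Fin 1) x = (replicateRow (Fin 1) x)ᴴ := by ext i j; simp [replicateCol, replicateRow]
  rw [h]
  exact posSemidef_conjTranspose_mul_self _

lemma trace_lemma (x y : Fin 2 → ℝ) :
    (vecMulVec x x * vecMulVec y y).trace = (x 0 * y 0 + x 1 * y 1)^2 := by
  simp [Matrix.trace, Matrix.mul_apply, vecMulVec, Fin.sum_univ_succ]
  ring

lemma trace_cyc (i j : Fin 5) :
    (vecMulVec (cycVec i) (cycVec i) * vecMulVec (cycVec j) (cycVec j)).trace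
      = cos (4*(i.1+1)*π/5 - 4*(j.1+1)*π/5)^2 := by
  rw [trace_lemma]
  simp only [cycVec, Matrix.cons_val_zero, Matrix.cons_val_one, Matrix.head_cons]
  rw [← Real.cos_sub]

lemma f1 : cos (8*π/5) = cos (2*π/5) := by
  rw [show (8*π/5:ℝ) = 2*π - 2*π/5 by ring, Real.cos_two_pi_sub]
lemma f2 : cos (12*π/5) = cos (2*π/5) := by
  rw [show (12*π/5:ℝ) = 2*π/5 + 2*π by ring, Real.cos_add_two_pi]
lemma f3 : cos (16*π/5) = cos (4*π/5) := by
  rw [show (16*π/5:ℝ) = (2*π - 4*π/5) + 2*π by ring, Real.cos_add_two_pi, Real.cos_two_pi_sub]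

set_option maxHeartbeats 1000000 in
lemma entry_eq (i j : Fin 5) :
    Mcirc (Real.cos (4 * π / 5) ^ 2) (Real.cos (2 * π / 5) ^ 2) i j
      = (vecMulVec (cycVec i) (cycVec i) * vecMulVec (cycVec j) (cycVec j)).trace := by
  fin_cases i <;> fin_cases j
  · -- i=0, j=0
    rw [trace_cyc]
    simp only [Mcirc, Matrix.of_apply]
    rw [if_pos trivial]
    norm_num
  · -- i=0, j=1
    rw [trace_cyc]
    simp only [Mcirc, Matrix.of_apply]
    rw [if_neg (by decide)]
    rw [if_pos (by decide)]
    norm_num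
    rw [show (4*π/5 - 8*π/5 : ℝ) = -(4*π/5) by ring]
    rw [Real.cos_neg]
  · -- i=0, j=2
    rw [trace_cyc]
    simp only [Mcirc, Matrix.of_apply]
    rw [if_neg (by decide)]
    rw [if_neg (by decide)]
    norm_num
    rw [show (4*π/5 - 12*π/5 : ℝ) = -(8*π/5) by ring]
    rw [Real.cos_neg]
    rw [f1]
  · -- i=0, j=3
    rw [trace_cyc]
    simp only [Mcirc, Matrix.of_apply]
    rw [if_neg (by decide)]
    rw [if_neg (by decide)]
    norm_num
    rw [show (4*π/5 - 16*π/5 : ℝ) = -(12*π/5) by ring]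
    rw [Real.cos_neg]
    rw [f2]
  · -- i=0, j=4
    rw [trace_cyc]
    simp only [Mcirc, Matrix.of_apply]
    rw [if_neg (by decide)]
    rw [if_pos (by decide)]
    norm_num
    rw [show (4*π/5 - 20*π/5 : ℝ) = -(16*π/5) by ring]
    rw [Real.cos_neg]
    rw [f3]
  · -- i=1, j=0
    rw [trace_cyc]
    simp only [Mcirc, Matrix.of_apply]
    rw [if_neg (by decide)]
    rw [if_pos (by decide)]
    norm_num
    rw [show (8*π/5 - 4*π/5 : ℝ) = 4*π/5 by ring]
  · -- i=1, j=1
    rw [trace_cyc]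
    simp only [Mcirc, Matrix.of_apply]
    rw [if_pos trivial]
    norm_num
  · -- i=1, j=2
    rw [trace_cyc]
    simp only [Mcirc, Matrix.of_apply]
    rw [if_neg (by decide)]
    rw [if_pos (by decide)]
    norm_num
    rw [show (8*π/5 - 12*π/5 : ℝ) = -(4*π/5) by ring]
    rw [Real.cos_neg]
  · -- i=1, j=3
    rw [trace_cyc]
    simp only [Mcirc, Matrix.of_apply]
    rw [if_neg (by decide)]
    rw [if_neg (by decide)]
    norm_num
    rw [show (8*π/5 - 16*π/5 : ℝ) = -(8*π/5) by ring]
    rw [Real.cos_neg]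
    rw [f1]
  · -- i=1, j=4
    rw [trace_cyc]
    simp only [Mcirc, Matrix.of_apply]
    rw [if_neg (by decide)]
    rw [if_neg (by decide)]
    norm_num
    rw [show (8*π/5 - 20*π/5 : ℝ) = -(12*π/5) by ring]
    rw [Real.cos_neg]
    rw [f2]
  · -- i=2, j=0
    rw [trace_cyc]
    simp only [Mcirc, Matrix.of_apply]
    rw [if_neg (by decide)]
    rw [if_neg (by decide)]
    norm_num
    rw [show (12*π/5 - 4*π/5 : ℝ) = 8*π/5 by ring]
    rw [f1]
  · -- i=2, j=1
    rw [trace_cyc]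
    simp only [Mcirc, Matrix.of_apply]
    rw [if_neg (by decide)]
    rw [if_pos (by decide)]
    norm_num
    rw [show (12*π/5 - 8*π/5 : ℝ) = 4*π/5 by ring]
  · -- i=2, j=2
    rw [trace_cyc]
    simp only [Mcirc, Matrix.of_apply]
    rw [if_pos trivial]
    norm_num
  · -- i=2, j=3
    rw [trace_cyc]
    simp only [Mcirc, Matrix.of_apply]
    rw [if_neg (by decide)]
    rw [if_pos (by decide)]
    norm_num
    rw [show (12*π/5 - 16*π/5 : ℝ) = -(4*π/5) by ring]
    rw [Real.cos_neg]
  · -- i=2, j=4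
    rw [trace_cyc]
    simp only [Mcirc, Matrix.of_apply]
    rw [if_neg (by decide)]
    rw [if_neg (by decide)]
    norm_num
    rw [show (12*π/5 - 20*π/5 : ℝ) = -(8*π/5) by ring]
    rw [Real.cos_neg]
    rw [f1]
  · -- i=3, j=0
    rw [trace_cyc]
    simp only [Mcirc, Matrix.of_apply]
    rw [if_neg (by decide)]
    rw [if_neg (by decide)]
    norm_num
    rw [show (16*π/5 - 4*π/5 : ℝ) = 12*π/5 by ring]
    rw [f2]
  · -- i=3, j=1
    rw [trace_cyc]
    simp only [Mcirc, Matrix.of_apply]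
    rw [if_neg (by decide)]
    rw [if_neg (by decide)]
    norm_num
    rw [show (16*π/5 - 8*π/5 : ℝ) = 8*π/5 by ring]
    rw [f1]
  · -- i=3, j=2
    rw [trace_cyc]
    simp only [Mcirc, Matrix.of_apply]
    rw [if_neg (by decide)]
    rw [if_pos (by decide)]
    norm_num
    rw [show (16*π/5 - 12*π/5 : ℝ) = 4*π/5 by ring]
  · -- i=3, j=3
    rw [trace_cyc]
    simp only [Mcirc, Matrix.of_apply]
    rw [if_pos trivial]
    norm_num
  · -- i=3, j=4
    rw [trace_cyc]
    simp only [Mcirc, Matrix.of_apply]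
    rw [if_neg (by decide)]
    rw [if_pos (by decide)]
    norm_num
    rw [show (16*π/5 - 20*π/5 : ℝ) = -(4*π/5) by ring]
    rw [Real.cos_neg]
  · -- i=4, j=0
    rw [trace_cyc]
    simp only [Mcirc, Matrix.of_apply]
    rw [if_neg (by decide)]
    rw [if_pos (by decide)]
    norm_num
    rw [show (20*π/5 - 4*π/5 : ℝ) = 16*π/5 by ring]
    rw [f3]
  · -- i=4, j=1
    rw [trace_cyc]
    simp only [Mcirc, Matrix.of_apply]
    rw [if_neg (by decide)]
    rw [if_neg (by decide)]
    norm_num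
    rw [show (20*π/5 - 8*π/5 : ℝ) = 12*π/5 by ring]
    rw [f2]
  · -- i=4, j=2
    rw [trace_cyc]
    simp only [Mcirc, Matrix.of_apply]
    rw [if_neg (by decide)]
    rw [if_neg (by decide)]
    norm_num
    rw [show (20*π/5 - 12*π/5 : ℝ) = 8*π/5 by ring]
    rw [f1]
  · -- i=4, j=3
    rw [trace_cyc]
    simp only [Mcirc, Matrix.of_apply]
    rw [if_neg (by decide)]
    rw [if_pos (by decide)]
    norm_num
    rw [show (20*π/5 - 16*π/5 : ℝ) = 4*π/5 by ring]
  · -- i=4, j=4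
    rw [trace_cyc]
    simp only [Mcirc, Matrix.of_apply]
    rw [if_pos trivial]
    norm_num
/-- The matrix `L = M(cos²(4π/5), cos²(2π/5))` is completely positive semidefinite:
the rank-one psd matrices `x_i x_iᵀ` form a Gram representation of `L`. -/
theorem L_completelyPSD :
    (∀ i : Fin 5, (vecMulVec (cycVec i) (cycVec i)).PosSemidef) ∧
    (∀ i j : Fin 5,
      Mcirc (Real.cos (4 * π / 5) ^ 2) (Real.cos (2 * π / 5) ^ 2) i j =
        (vecMulVec (cycVec i) (cycVec i) * vecMulVec (cycVec j) (cycVec j)).trace) ∧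
    CompletelyPSD (Mcirc (Real.cos (4 * π / 5) ^ 2) (Real.cos (2 * π / 5) ^ 2)) := by
  refine ⟨fun i => vecMulVec_self_posSemidef _, entry_eq, 2,
    fun i => vecMulVec (cycVec i) (cycVec i), by norm_num,
    fun i => vecMulVec_self_posSemidef _, entry_eq⟩
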